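/- Let (M, E*) be a constrained matrix with extended matrix M_e. Then (M, E*) admits a persistent perfect phylogeny consistent with E* if and only if M_e admits a completion whose columns are pairwise laminar, i.e., a completion that admits a rooted perfect phylogeny. -/

import Mathlib

/-! Common definitions for persistent perfect phylogeny formalizations. -/

/-- `AncRel parent i j` : node `i` is an ancestor (or equal to) node `j`
in the rooted tree given by the parent function. -/
def AncRel (parent : ℕ → ℕ) (i j : ℕ) : Prop := ∃ k : ℕ, parent^[k] j = i

/-- A persistent perfect phylogeny (p-pp) for the binary matrix `M`.
Nodes are `0, …, n-1`, the root is `0`, and each non-root node `i` has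
parent `parent i < i`; the (unique) edge entering `i` is identified with `i`. -/
structure PPTree (S C : Type*) (M : S → C → Bool) where
  n : ℕ
  n_pos : 0 < n
  parent : ℕ → ℕ
  parent_lt : ∀ i, 0 < i → i < n → parent i < i
  label : ℕ → C → Bool
  root_label : ∀ c, label 0 c = false
  /-- for each character there are at most two edges across which its state changes -/
  changes_le_two : ∀ c : C, ∀ i j k : ℕ,
    (0 < i ∧ i < n ∧ label (parent i) c ≠ label i c) →
    (0 < j ∧ j < n ∧ label (parent j) c ≠ label j c) →
    (0 < k ∧ k < n ∧ label (parent k) c ≠ label k c) →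
    i = j ∨ i = k ∨ j = k
  /-- two change edges of the same character lie on one root-to-leaf path,
  the higher one being the gain `c⁺` (0→1) and the lower one the loss `c⁻` (1→0) -/
  changes_on_path : ∀ c : C, ∀ i j : ℕ,
    (0 < i ∧ i < n ∧ label (parent i) c ≠ label i c) →
    (0 < j ∧ j < n ∧ label (parent j) c ≠ label j c) →
    i ≠ j →
    (AncRel parent i j ∧ label (parent i) c = false ∧ label i c = true ∧
      label (parent j) c = true ∧ label j c = false) ∨
    (AncRel parent j i ∧ label (parent j) c = false ∧ label j c = true ∧
      label (parent i) c = true ∧ label i c = false)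
  /-- if a character changes on exactly one edge, the change is a gain (0→1) -/
  single_change_gain : ∀ c : C, ∀ i : ℕ,
    (0 < i ∧ i < n ∧ label (parent i) c ≠ label i c) →
    (∀ j : ℕ, (0 < j ∧ j < n ∧ label (parent j) c ≠ label j c) → j = i) →
    (label (parent i) c = false ∧ label i c = true)
  /-- each row of `M` labels exactly one node of the tree -/
  rows_label : ∀ s : S, ∃! x : ℕ, x < n ∧ ∀ c, label x c = M s c

/-- Character `c` is persistent in the node `x`: the path from the root to `x`
contains both an edge labeled `c⁺` and an edge labeled `c⁻`. -/
def PPTree.persistentAt {S C : Type*} {M : S → C → Bool} (T : PPTree S C M)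
    (x : ℕ) (c : C) : Prop :=
  (∃ i, 0 < i ∧ i < T.n ∧ AncRel T.parent i x ∧
    T.label (T.parent i) c = false ∧ T.label i c = true) ∧
  (∃ j, 0 < j ∧ j < T.n ∧ AncRel T.parent j x ∧
    T.label (T.parent j) c = true ∧ T.label j c = false)

/-- A p-pp tree is consistent with the constraint set `E` if, for every
`(s,c) ∈ E`, the character `c` is not persistent in the species `s`. -/
def PPTree.consistent {S C : Type*} {M : S → C → Bool} (T : PPTree S C M)
    (E : Set (S × C)) : Prop :=
  ∀ p ∈ E, ∀ x : ℕ, x < T.n → (∀ c, T.label x c = M p.1 c) →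
    ¬ T.persistentAt x p.2

/-- Two (distinct) characters are in conflict when all four configurations
`(0,0), (0,1), (1,0), (1,1)` occur among the species. -/
def Conflicting {S C : Type*} (M : S → C → Bool) (c₁ c₂ : C) : Prop :=
  c₁ ≠ c₂ ∧
  (∃ s, M s c₁ = false ∧ M s c₂ = false) ∧
  (∃ s, M s c₁ = false ∧ M s c₂ = true) ∧
  (∃ s, M s c₁ = true ∧ M s c₂ = false) ∧
  (∃ s, M s c₁ = true ∧ M s c₂ = true)

/-- The conflict graph of `M` is empty: no two characters are in conflict. -/
def EmptyConflictGraph {S C : Type*} (M : S → C → Bool) : Prop :=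
  ∀ c₁ c₂ : C, ¬ Conflicting M c₁ c₂

/-- The column of a character, as a set of species. -/
def ColSet {S C : Type*} (M : S → C → Bool) (c : C) : Set S := {s | M s c = true}

/-- Column `c⁺` of the completion of the extended matrix of `(M,E)` determined by
the choice function `f` (the pair `(?,?)` of species `s` and character `c` is
completed to `(1,1)` iff `f s c` holds). -/
def ColPlus {S C : Type*} (M : S → C → Bool) (E : Set (S × C))
    (f : S → C → Prop) (c : C) : Set S :=
  {s | M s c = true ∨ ((s, c) ∉ E ∧ M s c = false ∧ f s c)}

/-- Column `c⁻` of the completion of the extended matrix of `(M,E)` determined by `f`. -/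
def ColMinus {S C : Type*} (M : S → C → Bool) (E : Set (S × C))
    (f : S → C → Prop) (c : C) : Set S :=
  {s | (s, c) ∉ E ∧ M s c = false ∧ f s c}

/-- The column of a signed character (`(c, true)` is `c⁺`, `(c, false)` is `c⁻`). -/
def ColOf {S C : Type*} (M : S → C → Bool) (E : Set (S × C))
    (f : S → C → Prop) : C × Bool → Set S :=
  fun p => if p.2 then ColPlus M E f p.1 else ColMinus M E f p.1

/-- Two sets are laminar: disjoint or one contains the other. -/
def LaminarPair {S : Type*} (X Y : Set S) : Prop := X ∩ Y = ∅ ∨ X ⊆ Y ∨ Y ⊆ X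

/-- The completion of the extended matrix of `(M,E)` given by `f` has pairwise
laminar columns, i.e. it admits a rooted (directed) perfect phylogeny. -/
def LaminarCompletion {S C : Type*} (M : S → C → Bool) (E : Set (S × C))
    (f : S → C → Prop) : Prop :=
  ∀ p q : C × Bool, LaminarPair (ColOf M E f p) (ColOf M E f q)

/-- The state of a character in a red-black graph. -/
inductive CharState : Type
  | inactive : CharState
  | active : CharState
  | free : CharState
deriving DecidableEq

/-- A red-black graph: an edge-bicolored bipartite graph on species and
characters, together with a state for each character and a set of forbidden
(species, character) pairs. -/
structure RBGraph (S C : Type*) where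
  black : S → C → Prop
  red : S → C → Prop
  charState : C → CharState
  forbidden : Set (S × C)

/-- The underlying simple graph of a red-black graph (edges of either color). -/
def RBGraph.graph {S C : Type*} (G : RBGraph S C) : SimpleGraph (S ⊕ C) where
  Adj v w :=
    (∃ s c, v = Sum.inl s ∧ w = Sum.inr c ∧ (G.black s c ∨ G.red s c)) ∨
    (∃ s c, w = Sum.inl s ∧ v = Sum.inr c ∧ (G.black s c ∨ G.red s c))
  symm := ⟨fun v w h => Or.symm h⟩
  loopless := ⟨by
    rintro v (⟨s, c, h₁, h₂, -⟩ | ⟨s, c, h₁, h₂, -⟩) <;> subst h₁ <;> simp at h₂⟩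

/-- The subgraph of a red-black graph formed by the red edges only. -/
def RBGraph.redGraph {S C : Type*} (G : RBGraph S C) : SimpleGraph (S ⊕ C) where
  Adj v w :=
    (∃ s c, v = Sum.inl s ∧ w = Sum.inr c ∧ G.red s c) ∨
    (∃ s c, w = Sum.inl s ∧ v = Sum.inr c ∧ G.red s c)
  symm := ⟨fun v w h => Or.symm h⟩
  loopless := ⟨by
    rintro v (⟨s, c, h₁, h₂, -⟩ | ⟨s, c, h₁, h₂, -⟩) <;> subst h₁ <;> simp at h₂⟩

/-- The species `s` belongs to the connected component `𝒞(c)` of character `c`. -/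
def RBGraph.reach {S C : Type*} (G : RBGraph S C) (c : C) (s : S) : Prop :=
  G.graph.Reachable (Sum.inr c) (Sum.inl s)

/-- The realization of character `c` is possible in `G`. -/
def RealizePossible {S C : Type*} (G : RBGraph S C) (c : C) : Prop :=
  match G.charState c with
  | CharState.inactive => ∀ s, G.reach c s → (s, c) ∉ G.forbidden
  | CharState.active => ∀ s, G.reach c s → G.red s c
  | CharState.free => False

/-- The realization of character `c` in the red-black graph `G`.
If `c` is inactive: add a red edge `{s,c}` for every species `s ∈ 𝒞(c)` not
adjacent to `c`, delete all black edges incident to `c`, forbid `(s,c)` for all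
`s ∉ 𝒞(c)`, and make `c` active.  If `c` is active: delete all red edges
incident to `c` and make `c` free. -/
def realize {S C : Type*} [DecidableEq C] (G : RBGraph S C) (c : C) : RBGraph S C :=
  match G.charState c with
  | CharState.inactive =>
    { black := fun s c' => G.black s c' ∧ c' ≠ c
      red := fun s c' =>
        if c' = c then G.red s c ∨ (G.reach c s ∧ ¬ G.black s c ∧ ¬ G.red s c)
        else G.red s c'
      charState := fun c' => if c' = c then CharState.active else G.charState c'
      forbidden := G.forbidden ∪ {p | p.2 = c ∧ ¬ G.reach c p.1} }
  | CharState.active =>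
    { black := G.black
      red := fun s c' => G.red s c' ∧ c' ≠ c
      charState := fun c' => if c' = c then CharState.free else G.charState c'
      forbidden := G.forbidden }
  | CharState.free => G

/-- Realize a sequence of characters, in order. -/
def realizeList {S C : Type*} [DecidableEq C] (G : RBGraph S C) : List C → RBGraph S C
  | [] => G
  | c :: l => realizeList (realize G c) l

/-- All realizations of the sequence, performed in order, are possible. -/
def AllPossible {S C : Type*} [DecidableEq C] (G : RBGraph S C) : List C → Prop
  | [] => True
  | c :: l => RealizePossible G c ∧ AllPossible (realize G c) l

/-- The initial red-black graph of the constrained matrix `(M, E)`: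
a black edge `{s,c}` iff `M s c = 1`, all characters inactive, forbidden set `E`. -/
def initRB {S C : Type*} (M : S → C → Bool) (E : Set (S × C)) : RBGraph S C :=
  { black := fun s c => M s c = true
    red := fun _ _ => False
    charState := fun _ => CharState.inactive
    forbidden := E }

/-- The red-black graph has no edges at all. -/
def Edgeless {S C : Type*} (G : RBGraph S C) : Prop :=
  ∀ (s : S) (c : C), ¬ G.black s c ∧ ¬ G.red s c

/-- A proper sequence of signed characters: each signed character occurs at most
once, and `c⁻` occurs only after the corresponding `c⁺`. -/
def ProperSigned {C : Type*} [DecidableEq C] (R : List (C × Bool)) : Prop :=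
  (∀ σ : C × Bool, R.count σ ≤ 1) ∧
  (∀ c : C, (c, false) ∈ R →
    ∃ i j : Fin R.length, (i : ℕ) < (j : ℕ) ∧ R.get i = (c, true) ∧ R.get j = (c, false))

/-- A successful c-reduction of the red-black graph of `(M, E)`: a proper signed
sequence containing `c⁺` for every character, all of whose realizations are
possible in order, and whose final red-black graph has no edges. -/
def SuccessfulCReduction {S C : Type*} [DecidableEq C] (M : S → C → Bool)
    (E : Set (S × C)) (R : List (C × Bool)) : Prop :=
  ProperSigned R ∧ (∀ c : C, (c, true) ∈ R) ∧
  AllPossible (initRB M E) (R.map Prod.fst) ∧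
  Edgeless (realizeList (initRB M E) (R.map Prod.fst))

/-- The canonical completion of the extended matrix of `(M,E)` associated with a
successful c-reduction `R`: at the first realization of each character `c`, the
pair of species `s` and character `c` is completed to `(1,1)` iff `s ∈ 𝒞(c)` at
that moment. -/
def canonComp {S C : Type*} [DecidableEq C] (M : S → C → Bool) (E : Set (S × C))
    (R : List (C × Bool)) : S → C → Prop :=
  fun s c =>
    (realizeList (initRB M E)
      ((R.takeWhile (fun p => decide (p ≠ (c, true)))).map Prod.fst)).reach c s

/-- `L` is a label sequence of node `x` of the p-pp tree `T`: it lists, without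
repetition and in root-to-`x` order, exactly the signed characters labeling the
edges on the path from the root to `x` (`(c, true)` stands for `c⁺`,
`(c, false)` for `c⁻`). -/
def IsLabelSeq {S C : Type*} {M : S → C → Bool} (T : PPTree S C M) (x : ℕ)
    (L : List (C × Bool)) : Prop :=
  L.Nodup ∧
  (∀ σ : C × Bool, σ ∈ L ↔ ∃ i, 0 < i ∧ i < T.n ∧ AncRel T.parent i x ∧
    T.label (T.parent i) σ.1 = (!σ.2) ∧ T.label i σ.1 = σ.2) ∧
  (∀ p q : Fin L.length, (p : ℕ) < (q : ℕ) → ∀ i j : ℕ,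
    (0 < i ∧ i < T.n ∧ AncRel T.parent i x ∧
      T.label (T.parent i) (L.get p).1 = (!(L.get p).2) ∧
      T.label i (L.get p).1 = (L.get p).2) →
    (0 < j ∧ j < T.n ∧ AncRel T.parent j x ∧
      T.label (T.parent j) (L.get q).1 = (!(L.get q).2) ∧
      T.label j (L.get q).1 = (L.get q).2) →
    AncRel T.parent i j)

/-- A solution of a General Character Compatibility instance (with all character
trees equal to the directed path `0 → 1 → 2`). -/
structure GCCSolution (S C : Type*) (α : C → S → Set (Fin 3)) where
  n : ℕ
  n_pos : 0 < n
  parent : ℕ → ℕ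
  parent_lt : ∀ i, 0 < i → i < n → parent i < i
  st : ℕ → C → Fin 3
  /-- every species has a node whose states belong to the prescribed sets -/
  species_node : ∀ s : S, ∃ v : ℕ, v < n ∧ ∀ c : C, st v c ∈ α c s
  /-- for each character and state, the nodes carrying that state induce a
  connected subtree: any two of them are joined by a path inside the set,
  through a common ancestor carrying the same state -/
  state_connected : ∀ (c : C) (q : Fin 3) (u v : ℕ), u < n → v < n →
    st u c = q → st v c = q →
    ∃ r : ℕ, r < n ∧ st r c = q ∧ AncRel parent r u ∧ AncRel parent r v ∧
      (∀ w : ℕ, AncRel parent r w → AncRel parent w u → st w c = q) ∧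
      (∀ w : ℕ, AncRel parent r w → AncRel parent w v → st w c = q)
  /-- along each edge a state is unchanged or moves one step along `0 → 1 → 2` -/
  edge_ok : ∀ (c : C) (i : ℕ), 0 < i → i < n →
    st (parent i) c = st i c ∨
    (st (parent i) c = 0 ∧ st i c = 1) ∨
    (st (parent i) c = 1 ∧ st i c = 2)

namespace Stmt2Fwd

/-- genuine ancestor: reached by iterating parent without passing through the root. -/
def genAnc (parent : ℕ → ℕ) (i x : ℕ) : Prop :=
  ∃ k : ℕ, parent^[k] x = i ∧ ∀ m, m < k → parent^[m] x ≠ 0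

variable {parent : ℕ → ℕ} {n : ℕ}
  (hp : ∀ i, 0 < i → i < n → parent i < i)

theorem iter_lt_n (hx : ∀ {x}, x < n → 0 < x → parent x < x) {x : ℕ} (hxn : x < n) :
    ∀ k, (∀ m, m < k → parent^[m] x ≠ 0) → parent^[k] x < n := by
  intro k
  induction k with
  | zero => intro _; simpa using hxn
  | succ k ih =>
    intro h
    rw [Function.iterate_succ_apply']
    have h1 : parent^[k] x < n := ih (fun m hm => h m (hm.trans (Nat.lt_succ_self k)))
    have h2 : parent^[k] x ≠ 0 := h k (Nat.lt_succ_self k)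
    exact lt_trans (hx h1 (Nat.pos_of_ne_zero h2)) h1

theorem genAnc_refl (x : ℕ) : genAnc parent x x := ⟨0, rfl, by omega⟩

theorem genAnc_lt_n (hx : ∀ {x}, x < n → 0 < x → parent x < x) {i x : ℕ} (hxn : x < n)
    (h : genAnc parent i x) : i < n := by
  obtain ⟨k, hk, hne⟩ := h
  exact hk ▸ iter_lt_n hx hxn k hne

theorem genAnc_le (hx : ∀ {x}, x < n → 0 < x → parent x < x) {i x : ℕ} (hxn : x < n)
    (h : genAnc parent i x) : i ≤ x := by
  obtain ⟨k, hk, hne⟩ := h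
  subst hk
  induction k with
  | zero => simp
  | succ k ih =>
    rw [Function.iterate_succ_apply']
    have h1 : parent^[k] x < n := iter_lt_n hx hxn k (fun m hm => hne m (hm.trans (Nat.lt_succ_self k)))
    have h2 : parent^[k] x ≠ 0 := hne k (Nat.lt_succ_self k)
    have := hx h1 (Nat.pos_of_ne_zero h2)
    exact le_trans this.le (ih (fun m hm => hne m (hm.trans (Nat.lt_succ_self k))))

theorem genAnc_trans {i j x : ℕ} (hij : genAnc parent i j) (hjx : genAnc parent j x) :
    genAnc parent i x := by
  obtain ⟨b, hb, hbne⟩ := hij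
  obtain ⟨a, ha, hane⟩ := hjx
  refine ⟨b + a, ?_, ?_⟩
  · rw [Function.iterate_add_apply, ha, hb]
  · intro m hm
    by_cases hma : m < a
    · exact hane m hma
    · have : parent^[m] x = parent^[m - a] j := by
        rw [← ha, ← Function.iterate_add_apply]
        congr 1; omega
      rw [this]; exact hbne _ (by omega)

theorem genAnc_total {i j x : ℕ} (hi : genAnc parent i x) (hj : genAnc parent j x) :
    genAnc parent i j ∨ genAnc parent j i := by
  obtain ⟨a, ha, hane⟩ := hi
  obtain ⟨b, hb, hbne⟩ := hj
  rcases le_total a b with hab | hab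
  · right
    have hba : b - a + a = b := by omega
    refine ⟨b - a, ?_, ?_⟩
    · rw [← ha, ← Function.iterate_add_apply, hba, hb]
    · intro m hm
      rw [← ha, ← Function.iterate_add_apply]
      exact hbne _ (by omega)
  · left
    have hab' : a - b + b = a := by omega
    refine ⟨a - b, ?_, ?_⟩
    · rw [← hb, ← Function.iterate_add_apply, hab', ha]
    · intro m hm
      rw [← hb, ← Function.iterate_add_apply]
      exact hane _ (by omega)

theorem genAnc_ancRel {i x : ℕ} (h : genAnc parent i x) : AncRel parent i x :=
  ⟨h.choose, h.choose_spec.1⟩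

/-- extend a genuine ancestry one step down. -/
theorem genAnc_step {i x : ℕ} (hx : x ≠ 0) (h : genAnc parent i (parent x)) :
    genAnc parent i x := by
  obtain ⟨k, hk, hne⟩ := h
  refine ⟨k + 1, by rwa [Function.iterate_succ_apply], ?_⟩
  intro m hm
  cases m with
  | zero => simpa using hx
  | succ m => rw [Function.iterate_succ_apply]; exact hne m (by omega)

/-- move a genuine ancestry one step up (target side). -/
theorem genAnc_unstep {i x : ℕ} (hne : x ≠ i) (h : genAnc parent i x) :
    genAnc parent i (parent x) := by
  obtain ⟨k, hk, hkne⟩ := h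
  cases k with
  | zero => simp only [Function.iterate_zero, id_eq] at hk; exact absurd hk hne
  | succ k =>
    rw [Function.iterate_succ_apply] at hk
    refine ⟨k, hk, fun m hm => ?_⟩
    rw [← Function.iterate_succ_apply]
    exact hkne (m + 1) (by omega)

/-- move a genuine ancestry one step up (source side). -/
theorem genAnc_parent_of {i x : ℕ} (hi : i ≠ 0) (h : genAnc parent i x) :
    genAnc parent (parent i) x := by
  obtain ⟨k, hk, hkne⟩ := h
  refine ⟨k + 1, by rw [Function.iterate_succ_apply', hk], fun m hm => ?_⟩
  rcases Nat.lt_succ_iff_lt_or_eq.mp hm with h' | h'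
  · exact hkne m h'
  · subst h'; rwa [hk]

end Stmt2Fwd

namespace Stmt2Fwd

variable {S C : Type*} {M : S → C → Bool}

/-- gain edge for character c -/
def gainE (T : PPTree S C M) (c : C) (i : ℕ) : Prop :=
  0 < i ∧ i < T.n ∧ T.label (T.parent i) c = false ∧ T.label i c = true

/-- loss edge for character c -/
def lossE (T : PPTree S C M) (c : C) (i : ℕ) : Prop :=
  0 < i ∧ i < T.n ∧ T.label (T.parent i) c = true ∧ T.label i c = false

theorem gainE_change {T : PPTree S C M} {c : C} {i : ℕ} (h : gainE T c i) :
    0 < i ∧ i < T.n ∧ T.label (T.parent i) c ≠ T.label i c :=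
  ⟨h.1, h.2.1, by rw [h.2.2.1, h.2.2.2]; simp⟩

theorem lossE_change {T : PPTree S C M} {c : C} {i : ℕ} (h : lossE T c i) :
    0 < i ∧ i < T.n ∧ T.label (T.parent i) c ≠ T.label i c :=
  ⟨h.1, h.2.1, by rw [h.2.2.1, h.2.2.2]; simp⟩

theorem tparent {T : PPTree S C M} : ∀ {x}, x < T.n → 0 < x → T.parent x < x :=
  fun h1 h2 => T.parent_lt _ h2 h1

theorem gain_unique {T : PPTree S C M} {c : C} {g g' : ℕ}
    (h : gainE T c g) (h' : gainE T c g') : g = g' := by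
  by_contra hne
  rcases T.changes_on_path c g g' (gainE_change h) (gainE_change h') hne with
    ⟨_, _, _, h4, _⟩ | ⟨_, _, _, h4, _⟩
  · rw [h'.2.2.1] at h4; exact absurd h4 (by simp)
  · rw [h.2.2.1] at h4; exact absurd h4 (by simp)

theorem loss_unique {T : PPTree S C M} {c : C} {g g' : ℕ}
    (h : lossE T c g) (h' : lossE T c g') : g = g' := by
  by_contra hne
  rcases T.changes_on_path c g g' (lossE_change h) (lossE_change h') hne with
    ⟨_, h2, _, _, _⟩ | ⟨_, h2, _, _, _⟩
  · rw [h.2.2.1] at h2; exact absurd h2 (by simp)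
  · rw [h'.2.2.1] at h2; exact absurd h2 (by simp)

theorem exists_gain_above (T : PPTree S C M) (c : C) :
    ∀ x, x < T.n → T.label x c = true → ∃ g, gainE T c g ∧ genAnc T.parent g x := by
  intro x
  induction x using Nat.strong_induction_on with
  | _ x ih =>
    intro hxn hlab
    rcases Nat.eq_zero_or_pos x with rfl | hx
    · rw [T.root_label] at hlab; exact absurd hlab (by simp)
    · cases hpl : T.label (T.parent x) c with
      | false => exact ⟨x, ⟨hx, hxn, hpl, hlab⟩, genAnc_refl x⟩
      | true =>
        have hplt : T.parent x < x := T.parent_lt x hx hxn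
        obtain ⟨g, hg, hanc⟩ := ih (T.parent x) hplt (hplt.trans hxn) hpl
        exact ⟨g, hg, genAnc_step (by omega) hanc⟩

theorem genAnc_zero {parent : ℕ → ℕ} {g : ℕ} (h : genAnc parent g 0) : g = 0 := by
  obtain ⟨k, hk, hne⟩ := h
  cases k with
  | zero => exact hk.symm
  | succ k => exact absurd (by simp : (0:ℕ) = 0) (by simpa using hne 0 (Nat.succ_pos k))

theorem exists_loss_below {T : PPTree S C M} {c : C} {g : ℕ} (hg : gainE T c g) :
    ∀ x, x < T.n → genAnc T.parent g x → T.label x c = false →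
    ∃ l, lossE T c l ∧ genAnc T.parent l x := by
  intro x
  induction x using Nat.strong_induction_on with
  | _ x ih =>
    intro hxn hanc hlab
    have hxg : x ≠ g := fun h => by rw [h, hg.2.2.2] at hlab; exact absurd hlab (by simp)
    rcases Nat.eq_zero_or_pos x with rfl | hx
    · exact absurd (genAnc_zero hanc) (by omega)
    · cases hpl : T.label (T.parent x) c with
      | true => exact ⟨x, ⟨hx, hxn, hpl, hlab⟩, genAnc_refl x⟩
      | false =>
        have hplt : T.parent x < x := T.parent_lt x hx hxn
        obtain ⟨l, hl, hanc'⟩ := ih (T.parent x) hplt (hplt.trans hxn)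
          (genAnc_unstep hxg hanc) hpl
        exact ⟨l, hl, genAnc_step (by omega) hanc'⟩

theorem exists_gain_between {T : PPTree S C M} {c : C} {l : ℕ}
    (hl : T.label l c = false) :
    ∀ x, x < T.n → genAnc T.parent l x → T.label x c = true →
    ∃ e, gainE T c e ∧ genAnc T.parent e x ∧ genAnc T.parent l (T.parent e) := by
  intro x
  induction x using Nat.strong_induction_on with
  | _ x ih =>
    intro hxn hanc hlab
    have hxl : x ≠ l := fun h => by rw [h, hl] at hlab; exact absurd hlab (by simp)
    rcases Nat.eq_zero_or_pos x with rfl | hx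
    · rw [T.root_label] at hlab; exact absurd hlab (by simp)
    · have hanc' : genAnc T.parent l (T.parent x) := genAnc_unstep hxl hanc
      cases hpl : T.label (T.parent x) c with
      | false => exact ⟨x, ⟨hx, hxn, hpl, hlab⟩, genAnc_refl x, hanc'⟩
      | true =>
        have hplt : T.parent x < x := T.parent_lt x hx hxn
        obtain ⟨e, he, ha1, ha2⟩ := ih (T.parent x) hplt (hplt.trans hxn) hanc' hpl
        exact ⟨e, he, genAnc_step (by omega) ha1, ha2⟩

theorem no_loss_above_true {T : PPTree S C M} {c : C} {l x : ℕ}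
    (hxn : x < T.n) (hlab : T.label x c = true) (hl : lossE T c l)
    (hanc : genAnc T.parent l x) : False := by
  obtain ⟨e, he, hex, hle⟩ := exists_gain_between hl.2.2.2 x hxn hanc hlab
  have hpln : T.parent l < T.n := (tparent hl.2.1 hl.1).trans hl.2.1
  obtain ⟨g, hgg, hganc⟩ := exists_gain_above T c (T.parent l) hpln hl.2.2.1
  have heg : e = g := gain_unique he hgg
  have h1 : g ≤ T.parent l := genAnc_le (fun h1 h2 => T.parent_lt _ h2 h1) hpln hganc
  have h2 : T.parent l < l := tparent hl.2.1 hl.1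
  have hpen : T.parent e < T.n := (tparent he.2.1 he.1).trans he.2.1
  have h3 : l ≤ T.parent e := genAnc_le (fun h1 h2 => T.parent_lt _ h2 h1) hpen hle
  have h4 : T.parent e < e := tparent he.2.1 he.1
  omega

end Stmt2Fwd

namespace Stmt2Fwd

variable {S C : Type*} {M : S → C → Bool}

noncomputable def nodeOf (T : PPTree S C M) (s : S) : ℕ := (T.rows_label s).exists.choose

theorem nodeOf_lt (T : PPTree S C M) (s : S) : nodeOf T s < T.n :=
  (T.rows_label s).exists.choose_spec.1

theorem nodeOf_label (T : PPTree S C M) (s : S) (c : C) :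
    T.label (nodeOf T s) c = M s c :=
  (T.rows_label s).exists.choose_spec.2 c

/-- the canonical completion induced by a consistent p-pp tree -/
def fCan (T : PPTree S C M) : S → C → Prop :=
  fun s c => ∃ l, lossE T c l ∧ genAnc T.parent l (nodeOf T s)

theorem persist_of {T : PPTree S C M} {s : S} {c : C} {g l : ℕ}
    (hg : gainE T c g) (hganc : genAnc T.parent g (nodeOf T s))
    (hl : lossE T c l) (hlanc : genAnc T.parent l (nodeOf T s)) :
    T.persistentAt (nodeOf T s) c :=
  ⟨⟨g, hg.1, hg.2.1, genAnc_ancRel hganc, hg.2.2.1, hg.2.2.2⟩,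
   ⟨l, hl.1, hl.2.1, genAnc_ancRel hlanc, hl.2.2.1, hl.2.2.2⟩⟩

/-- from a loss edge above the node of `s`, get a gain edge above the node of `s`. -/
theorem gain_of_loss {T : PPTree S C M} {s : S} {c : C} {l : ℕ}
    (hl : lossE T c l) (hanc : genAnc T.parent l (nodeOf T s)) :
    ∃ g, gainE T c g ∧ genAnc T.parent g (nodeOf T s) := by
  have hpln : T.parent l < T.n := (tparent hl.2.1 hl.1).trans hl.2.1
  obtain ⟨g, hg, hganc⟩ := exists_gain_above T c (T.parent l) hpln hl.2.2.1
  have h2 : genAnc T.parent (T.parent l) (nodeOf T s) :=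
    genAnc_parent_of (by have := hl.1; omega) hanc
  exact ⟨g, hg, genAnc_trans hganc h2⟩

theorem not_in_E {E : Set (S × C)} {T : PPTree S C M} (hcons : T.consistent E)
    {s : S} {c : C} {l : ℕ} (hl : lossE T c l)
    (hanc : genAnc T.parent l (nodeOf T s)) : (s, c) ∉ E := by
  intro hmem
  obtain ⟨g, hg, hganc⟩ := gain_of_loss hl hanc
  exact hcons (s, c) hmem (nodeOf T s) (nodeOf_lt T s) (fun c' => nodeOf_label T s c')
    (persist_of hg hganc hl hanc)

theorem mem_minus {E : Set (S × C)} {T : PPTree S C M} (hcons : T.consistent E)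
    (s : S) (c : C) :
    s ∈ ColMinus M E (fCan T) c ↔ fCan T s c := by
  constructor
  · exact fun h => h.2.2
  · intro hf
    obtain ⟨l, hl, hanc⟩ := hf
    have hM : M s c = false := by
      cases hMv : M s c
      · rfl
      · exact absurd (no_loss_above_true (nodeOf_lt T s)
          ((nodeOf_label T s c).trans hMv) hl hanc) (by simp)
    exact ⟨not_in_E hcons hl hanc, hM, ⟨l, hl, hanc⟩⟩

theorem mem_plus {E : Set (S × C)} {T : PPTree S C M} (hcons : T.consistent E)
    (s : S) (c : C) :
    s ∈ ColPlus M E (fCan T) c ↔ ∃ g, gainE T c g ∧ genAnc T.parent g (nodeOf T s) := by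
  constructor
  · rintro (hM | ⟨_, _, hf⟩)
    · exact exists_gain_above T c (nodeOf T s) (nodeOf_lt T s)
        ((nodeOf_label T s c).trans hM)
    · obtain ⟨l, hl, hanc⟩ := hf
      exact gain_of_loss hl hanc
  · rintro ⟨g, hg, hganc⟩
    cases hMv : M s c
    · have hlabel : T.label (nodeOf T s) c = false := (nodeOf_label T s c).trans hMv
      obtain ⟨l, hl, hlanc⟩ := exists_loss_below hg (nodeOf T s) (nodeOf_lt T s) hganc hlabel
      exact Or.inr ⟨not_in_E hcons hl hlanc, hMv, ⟨l, hl, hlanc⟩⟩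
    · exact Or.inl hMv

theorem lam_aux {T : PPTree S C M} {P Q : ℕ → Prop}
    (hPu : ∀ {e e'}, P e → P e' → e = e') (hQu : ∀ {e e'}, Q e → Q e' → e = e') :
    LaminarPair {s : S | ∃ e, P e ∧ genAnc T.parent e (nodeOf T s)}
      {s : S | ∃ e, Q e ∧ genAnc T.parent e (nodeOf T s)} := by
  classical
  by_cases hP : ∃ e, P e
  · by_cases hQ : ∃ e, Q e
    · obtain ⟨ep, hep⟩ := hP
      obtain ⟨eq', heq⟩ := hQ
      by_cases hpq : genAnc T.parent ep eq'
      · right; right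
        rintro s ⟨e, he, hanc⟩
        rw [hQu he heq] at hanc
        exact ⟨ep, hep, genAnc_trans hpq hanc⟩
      · by_cases hqp : genAnc T.parent eq' ep
        · right; left
          rintro s ⟨e, he, hanc⟩
          rw [hPu he hep] at hanc
          exact ⟨eq', heq, genAnc_trans hqp hanc⟩
        · left
          ext s
          simp only [Set.mem_inter_iff, Set.mem_setOf_eq, Set.mem_empty_iff_false, iff_false]
          rintro ⟨⟨e1, he1, hanc1⟩, ⟨e2, he2, hanc2⟩⟩
          rw [hPu he1 hep] at hanc1
          rw [hQu he2 heq] at hanc2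
          rcases genAnc_total hanc1 hanc2 with h | h
          · exact hpq h
          · exact hqp h
    · left
      have : {s : S | ∃ e, Q e ∧ genAnc T.parent e (nodeOf T s)} = ∅ := by
        ext s; simp only [Set.mem_setOf_eq, Set.mem_empty_iff_false, iff_false]
        rintro ⟨e, he, _⟩; exact hQ ⟨e, he⟩
      rw [this, Set.inter_empty]
  · left
    have : {s : S | ∃ e, P e ∧ genAnc T.parent e (nodeOf T s)} = ∅ := by
      ext s; simp only [Set.mem_setOf_eq, Set.mem_empty_iff_false, iff_false]
      rintro ⟨e, he, _⟩; exact hP ⟨e, he⟩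
    rw [this, Set.empty_inter]

theorem forward {E : Set (S × C)} (T : PPTree S C M) (hcons : T.consistent E) :
    LaminarCompletion M E (fCan T) := by
  have hplus : ∀ c, ColPlus M E (fCan T) c
      = {s : S | ∃ g, gainE T c g ∧ genAnc T.parent g (nodeOf T s)} :=
    fun c => Set.ext fun s => mem_plus hcons s c
  have hminus : ∀ c, ColMinus M E (fCan T) c
      = {s : S | ∃ l, lossE T c l ∧ genAnc T.parent l (nodeOf T s)} :=
    fun c => Set.ext fun s => mem_minus hcons s c
  rintro ⟨c1, b1⟩ ⟨c2, b2⟩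
  cases b1 <;> cases b2 <;> simp only [ColOf, if_true, if_false, Bool.false_eq_true]
  · rw [hminus c1, hminus c2]
    exact lam_aux (fun h h' => loss_unique h h') (fun h h' => loss_unique h h')
  · rw [hminus c1, hplus c2]
    exact lam_aux (fun h h' => loss_unique h h') (fun h h' => gain_unique h h')
  · rw [hplus c1, hminus c2]
    exact lam_aux (fun h h' => gain_unique h h') (fun h h' => loss_unique h h')
  · rw [hplus c1, hplus c2]
    exact lam_aux (fun h h' => gain_unique h h') (fun h h' => gain_unique h h')

end Stmt2Fwd

namespace Stmt2Bwd

set_option linter.unusedSectionVars false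

attribute [local instance] Classical.propDecidable

variable {S C : Type*} [Fintype S] [Fintype C]

theorem colOf_true (M : S → C → Bool) (E : Set (S × C)) (f : S → C → Prop) (c : C) :
    ColOf M E f (c, true) = ColPlus M E f c := rfl

theorem colOf_false (M : S → C → Bool) (E : Set (S × C)) (f : S → C → Prop) (c : C) :
    ColOf M E f (c, false) = ColMinus M E f c := rfl

theorem colMinus_subset_colPlus (M : S → C → Bool) (E : Set (S × C)) (f : S → C → Prop)
    (c : C) : ColMinus M E f c ⊆ ColPlus M E f c :=
  fun _ h => Or.inr h

theorem colOf_sub (M : S → C → Bool) (E : Set (S × C)) (f : S → C → Prop) (c : C) :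
    ColOf M E f (c, false) ⊆ ColOf M E f (c, true) :=
  colMinus_subset_colPlus M E f c

/-- signature of a species: the set of signed characters whose column contains it -/
noncomputable def sig (M : S → C → Bool) (E : Set (S × C)) (f : S → C → Prop) (s : S) :
    Finset (C × Bool) :=
  Finset.univ.filter (fun p => s ∈ ColOf M E f p)

theorem mem_sig {M : S → C → Bool} {E : Set (S × C)} {f : S → C → Prop} {s : S}
    {p : C × Bool} : p ∈ sig M E f s ↔ s ∈ ColOf M E f p := by
  simp [sig]

/-- the common prefix of the signatures of the species in Z -/
noncomputable def infSig (M : S → C → Bool) (E : Set (S × C)) (f : S → C → Prop)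
    (Z : Finset S) : Finset (C × Bool) :=
  Finset.univ.filter (fun p => ∀ v ∈ Z, v ∈ ColOf M E f p)

theorem mem_infSig {M : S → C → Bool} {E : Set (S × C)} {f : S → C → Prop} {Z : Finset S}
    {p : C × Bool} : p ∈ infSig M E f Z ↔ ∀ v ∈ Z, v ∈ ColOf M E f p := by
  simp [infSig]

theorem infSig_singleton (M : S → C → Bool) (E : Set (S × C)) (f : S → C → Prop) (s : S) :
    infSig M E f {s} = sig M E f s := by
  ext p; simp [mem_infSig, mem_sig]

/-- tree nodes: the empty set together with common prefixes of signatures -/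
def isNode (M : S → C → Bool) (E : Set (S × C)) (f : S → C → Prop)
    (N : Finset (C × Bool)) : Prop :=
  N = ∅ ∨ ∃ Z : Finset S, Z.Nonempty ∧ N = infSig M E f Z

theorem isNode_empty (M : S → C → Bool) (E : Set (S × C)) (f : S → C → Prop) :
    isNode M E f ∅ := Or.inl rfl

theorem isNode_sig (M : S → C → Bool) (E : Set (S × C)) (f : S → C → Prop) (s : S) :
    isNode M E f (sig M E f s) :=
  Or.inr ⟨{s}, Finset.singleton_nonempty s, (infSig_singleton M E f s).symm⟩

theorem isNode_inter {M : S → C → Bool} {E : Set (S × C)} {f : S → C → Prop}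
    {N N' : Finset (C × Bool)} (h : isNode M E f N) (h' : isNode M E f N') :
    isNode M E f (N ∩ N') := by
  rcases h with rfl | ⟨Z, hZ, rfl⟩
  · left; simp
  rcases h' with rfl | ⟨Z', hZ', rfl⟩
  · left; simp
  right
  refine ⟨Z ∪ Z', hZ.mono Finset.subset_union_left, ?_⟩
  ext p
  simp only [Finset.mem_inter, mem_infSig, Finset.mem_union]
  constructor
  · rintro ⟨h1, h2⟩ v (hv | hv)
    · exact h1 v hv
    · exact h2 v hv
  · intro h
    exact ⟨fun v hv => h v (Or.inl hv), fun v hv => h v (Or.inr hv)⟩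

theorem node_closure {M : S → C → Bool} {E : Set (S × C)} {f : S → C → Prop}
    {N : Finset (C × Bool)} (h : isNode M E f N) {c : C} (hc : (c, false) ∈ N) :
    (c, true) ∈ N := by
  rcases h with rfl | ⟨Z, hZ, rfl⟩
  · simp at hc
  · rw [mem_infSig] at hc ⊢
    exact fun v hv => colOf_sub M E f c (hc v hv)

theorem node_upward {M : S → C → Bool} {E : Set (S × C)} {f : S → C → Prop}
    {N : Finset (C × Bool)} (h : isNode M E f N) {p q : C × Bool} (hp : p ∈ N)
    (hsub : ColOf M E f p ⊆ ColOf M E f q) : q ∈ N := by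
  rcases h with rfl | ⟨Z, hZ, rfl⟩
  · simp at hp
  · rw [mem_infSig] at hp ⊢
    exact fun v hv => hsub (hp v hv)

theorem cols_nested {M : S → C → Bool} {E : Set (S × C)} {f : S → C → Prop}
    (hf : LaminarCompletion M E f) {N : Finset (C × Bool)} (h : isNode M E f N)
    {p q : C × Bool} (hp : p ∈ N) (hq : q ∈ N) :
    ColOf M E f p ⊆ ColOf M E f q ∨ ColOf M E f q ⊆ ColOf M E f p := by
  rcases h with rfl | ⟨Z, hZ, rfl⟩
  · simp at hp
  · obtain ⟨v, hv⟩ := hZ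
    rw [mem_infSig] at hp hq
    rcases hf p q with hd | hsub | hsub
    · exfalso
      have : v ∈ ColOf M E f p ∩ ColOf M E f q := ⟨hp v hv, hq v hv⟩
      rw [hd] at this; exact this
    · exact Or.inl hsub
    · exact Or.inr hsub

theorem nodes_comparable {M : S → C → Bool} {E : Set (S × C)} {f : S → C → Prop}
    (hf : LaminarCompletion M E f) {N N1 N2 : Finset (C × Bool)}
    (hN : isNode M E f N) (h1 : isNode M E f N1) (h2 : isNode M E f N2)
    (hs1 : N1 ⊆ N) (hs2 : N2 ⊆ N) : N1 ⊆ N2 ∨ N2 ⊆ N1 := by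
  by_contra hcon
  push_neg at hcon
  obtain ⟨hn1, hn2⟩ := hcon
  obtain ⟨p1, hp1, hp1'⟩ := Finset.not_subset.mp hn1
  obtain ⟨p2, hp2, hp2'⟩ := Finset.not_subset.mp hn2
  rcases cols_nested hf hN (hs1 hp1) (hs2 hp2) with hsub | hsub
  · exact hp2' (node_upward h1 hp1 hsub)
  · exact hp1' (node_upward h2 hp2 hsub)

/-- the C-label of a node -/
noncomputable def projB (N : Finset (C × Bool)) (c : C) : Bool :=
  decide ((c, true) ∈ N ∧ (c, false) ∉ N)

theorem projB_true_iff {N : Finset (C × Bool)} {c : C} :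
    projB N c = true ↔ ((c, true) ∈ N ∧ (c, false) ∉ N) := by
  simp [projB]

theorem projB_false_iff {N : Finset (C × Bool)} {c : C} :
    projB N c = false ↔ ((c, true) ∉ N ∨ (c, false) ∈ N) := by
  simp [projB]; tauto

theorem projB_empty (c : C) : projB (∅ : Finset (C × Bool)) c = false := by
  simp [projB]

theorem projB_inter {N1 N2 : Finset (C × Bool)} (h : projB N1 = projB N2) :
    projB (N1 ∩ N2) = projB N1 := by
  funext c
  have hc := congrFun h c
  cases h1 : projB N1 c
  · rw [projB_false_iff]
    rw [h1] at hc
    rcases projB_false_iff.mp h1 with h' | h'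
    · exact Or.inl (fun hmem => h' (Finset.mem_inter.mp hmem).1)
    · rcases projB_false_iff.mp hc.symm with h'' | h''
      · exact Or.inl (fun hmem => h'' (Finset.mem_inter.mp hmem).2)
      · by_cases hmem : (c, true) ∈ N1 ∩ N2
        · exact Or.inr (Finset.mem_inter.mpr ⟨h', h''⟩)
        · exact Or.inl hmem
  · rw [h1] at hc
    obtain ⟨ht1, hf1⟩ := projB_true_iff.mp h1
    obtain ⟨ht2, hf2⟩ := projB_true_iff.mp hc.symm
    rw [projB_true_iff]
    exact ⟨Finset.mem_inter.mpr ⟨ht1, ht2⟩, fun hmem => hf1 (Finset.mem_inter.mp hmem).1⟩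

end Stmt2Bwd

namespace Stmt2Bwd

variable {S C : Type*} [Fintype S] [Fintype C]

/-- total number of persistent entries of a completion -/
noncomputable def mu (M : S → C → Bool) (E : Set (S × C)) (f : S → C → Prop) : ℕ :=
  ∑ c : C, (ColMinus M E f c).ncard

theorem lamsymm {S' : Type*} {X Y : Set S'} (h : LaminarPair X Y) : LaminarPair Y X := by
  rcases h with h | h | h
  · left; rwa [Set.inter_comm]
  · right; right; exact h
  · right; left; exact h

theorem label_inj {M : S → C → Bool} {E : Set (S × C)} {f : S → C → Prop}
    (hf : LaminarCompletion M E f)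
    (hmin : ∀ g : S → C → Prop, LaminarCompletion M E g → mu M E f ≤ mu M E g)
    {N0 N1 : Finset (C × Bool)} (h0 : isNode M E f N0) (h1 : isNode M E f N1)
    (hsub : N0 ⊆ N1) (hproj : projB N0 = projB N1) : N0 = N1 := by
  classical
  by_contra hne
  have hD : (N1 \ N0).Nonempty := by
    rw [Finset.sdiff_nonempty]
    intro h
    exact hne (Finset.Subset.antisymm hsub h)
  -- the difference consists of complete pairs
  have hpair : ∀ c : C, ∀ b : Bool, (c, b) ∈ N1 \ N0 →
      ((c, true) ∈ N1 \ N0 ∧ (c, false) ∈ N1 \ N0) := by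
    intro c b hb
    have hiff : ((c, true) ∈ N0 ∧ (c, false) ∉ N0) ↔ ((c, true) ∈ N1 ∧ (c, false) ∉ N1) := by
      have h' := congrFun hproj c
      unfold projB at h'
      exact decide_eq_decide.mp h'
    rw [Finset.mem_sdiff] at hb
    cases b with
    | false =>
      have ht1 : (c, true) ∈ N1 := node_closure h1 hb.1
      constructor
      · rw [Finset.mem_sdiff]
        refine ⟨ht1, fun ht0 => ?_⟩
        exact (hiff.mp ⟨ht0, hb.2⟩).2 hb.1
      · rw [Finset.mem_sdiff]; exact hb
    | true =>
      have hf1 : (c, false) ∈ N1 := by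
        by_contra hf1
        exact hb.2 (hiff.mpr ⟨hb.1, hf1⟩).1
      have hf0 : (c, false) ∉ N0 := fun h => hb.2 (node_closure h0 (c := c) h)
      exact ⟨Finset.mem_sdiff.mpr ⟨hb.1, hb.2⟩, Finset.mem_sdiff.mpr ⟨hf1, hf0⟩⟩
  -- representation of N1
  have hN1ne : N1 ≠ ∅ := by
    obtain ⟨p, hp⟩ := hD
    intro h
    rw [h] at hp
    simp at hp
  obtain ⟨Z1, hZ1ne, hZ1⟩ : ∃ Z : Finset S, Z.Nonempty ∧ N1 = infSig M E f Z := by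
    rcases h1 with h | h
    · exact absurd h hN1ne
    · exact h
  obtain ⟨v1, hv1⟩ := hZ1ne
  have hZcol : ∀ p ∈ N1, ∀ v ∈ Z1, v ∈ ColOf M E f p := by
    intro p hp
    rw [hZ1, mem_infSig] at hp
    exact hp
  -- pair characters
  set PF : Finset C := Finset.univ.filter (fun c => (c, false) ∈ N1 \ N0) with hPFdef
  have hmemPF : ∀ c : C, c ∈ PF ↔ (c, false) ∈ N1 \ N0 := by
    intro c; simp [hPFdef]
  have hPFne : PF.Nonempty := by
    obtain ⟨⟨c, b⟩, hp⟩ := hD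
    exact ⟨c, (hmemPF c).mpr (hpair c b hp).2⟩
  obtain ⟨cstar, hcstar, hcmin⟩ :=
    PF.exists_min_image (fun c => (ColMinus M E f c).ncard) hPFne
  have hcstarD : (cstar, false) ∈ N1 \ N0 := (hmemPF cstar).mp hcstar
  set K : Set S := ColMinus M E f cstar with hKdef
  have hZK : ∀ v ∈ Z1, v ∈ K := by
    intro v hv
    have := hZcol (cstar, false) (Finset.mem_sdiff.mp hcstarD).1 v hv
    rwa [colOf_false] at this
  have hKne : K.Nonempty := ⟨v1, hZK v1 hv1⟩
  -- K is the minimal pair column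
  have hKsub : ∀ c ∈ PF, K ⊆ ColMinus M E f c := by
    intro c hc
    have hvc : v1 ∈ ColMinus M E f c := by
      have := hZcol (c, false) (Finset.mem_sdiff.mp ((hmemPF c).mp hc)).1 v1 hv1
      rwa [colOf_false] at this
    rcases hf (cstar, false) (c, false) with hd | hs | hs
    · exfalso
      rw [colOf_false, colOf_false] at hd
      have : v1 ∈ ColMinus M E f cstar ∩ ColMinus M E f c := ⟨hZK v1 hv1, hvc⟩
      rw [hd] at this
      exact this
    · rwa [colOf_false, colOf_false] at hs
    · rw [colOf_false, colOf_false] at hs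
      have heq := Set.eq_of_subset_of_ncard_le hs (hcmin c hc) (Set.toFinite _)
      rw [hKdef, ← heq]
  -- the smaller completion
  set f' : S → C → Prop := fun s c => f s c ∧ ¬((c, false) ∈ N1 \ N0 ∧ s ∈ K) with hf'def
  have hMi' : ∀ c, ColMinus M E f' c =
      if (c, false) ∈ N1 \ N0 then ColMinus M E f c \ K else ColMinus M E f c := by
    intro c
    ext s
    by_cases hc : (c, false) ∈ N1 \ N0
    · rw [if_pos hc]
      simp only [ColMinus, Set.mem_setOf_eq, Set.mem_diff, hf'def]
      constructor
      · rintro ⟨hE, hM0, hfs, hnk⟩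
        exact ⟨⟨hE, hM0, hfs⟩, fun hk => hnk ⟨hc, hk⟩⟩
      · rintro ⟨⟨hE, hM0, hfs⟩, hnk⟩
        exact ⟨hE, hM0, hfs, fun h => hnk h.2⟩
    · rw [if_neg hc]
      simp only [ColMinus, Set.mem_setOf_eq, hf'def]
      tauto
  have hPl' : ∀ c, ColPlus M E f' c =
      if (c, false) ∈ N1 \ N0 then ColPlus M E f c \ K else ColPlus M E f c := by
    intro c
    ext s
    by_cases hc : (c, false) ∈ N1 \ N0
    · rw [if_pos hc]
      have hKM : s ∈ K → M s c = false := fun hs =>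
        (hKsub c ((hmemPF c).mpr hc) hs).2.1
      simp only [ColPlus, Set.mem_setOf_eq, Set.mem_diff, hf'def]
      constructor
      · rintro (hM | ⟨hE, hM0, hfs, hnk⟩)
        · exact ⟨Or.inl hM, fun hk => by rw [hKM hk] at hM; exact Bool.false_ne_true hM⟩
        · exact ⟨Or.inr ⟨hE, hM0, hfs⟩, fun hk => hnk ⟨hc, hk⟩⟩
      · rintro ⟨hM | ⟨hE, hM0, hfs⟩, hnk⟩
        · exact Or.inl hM
        · exact Or.inr ⟨hE, hM0, hfs, fun h => hnk h.2⟩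
    · rw [if_neg hc]
      simp only [ColPlus, Set.mem_setOf_eq, hf'def]
      tauto
  have hCol' : ∀ p : C × Bool, ColOf M E f' p =
      if (p.1, false) ∈ N1 \ N0 then ColOf M E f p \ K else ColOf M E f p := by
    rintro ⟨c, b⟩
    cases b
    · simp only [colOf_false]; exact hMi' c
    · simp only [colOf_true]; exact hPl' c
  -- no unchanged column strictly between K and a pair column
  have no_mid : ∀ q : C × Bool, (q.1, false) ∉ N1 \ N0 → ∀ pA : C × Bool,
      (pA.1, false) ∈ N1 \ N0 → K ⊆ ColOf M E f q → ColOf M E f q ⊆ ColOf M E f pA →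
      False := by
    rintro ⟨qc, qb⟩ hq ⟨pc, pb⟩ hpA hKq hqA
    have hqN1 : (qc, qb) ∈ N1 := by
      rw [hZ1, mem_infSig]
      exact fun v hv => hKq (hZK v hv)
    have hqN0 : (qc, qb) ∈ N0 := by
      by_contra h
      exact hq (hpair qc qb (Finset.mem_sdiff.mpr ⟨hqN1, h⟩)).2
    have hpD : (pc, pb) ∈ N1 \ N0 := by
      cases pb
      · exact hpA
      · exact (hpair pc false hpA).1
    exact (Finset.mem_sdiff.mp hpD).2 (node_upward h0 hqN0 hqA)
  -- mixed laminarity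
  have lam_mixed : ∀ p q : C × Bool, (p.1, false) ∈ N1 \ N0 → (q.1, false) ∉ N1 \ N0 →
      LaminarPair (ColOf M E f p \ K) (ColOf M E f q) := by
    intro p q hp hq
    rcases hf p q with hd | hs | hs
    · left
      rw [Set.eq_empty_iff_forall_notMem] at hd ⊢
      exact fun s hs => hd s ⟨hs.1.1, hs.2⟩
    · right; left
      exact Set.diff_subset.trans hs
    · -- ColOf q ⊆ ColOf p
      have hqK : LaminarPair (ColOf M E f q) K := by
        have := hf q (cstar, false)
        rwa [colOf_false] at this
      rcases hqK with hd2 | hs2 | hs2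
      · right; right
        intro s hs'
        refine ⟨hs hs', fun hk => ?_⟩
        rw [Set.eq_empty_iff_forall_notMem] at hd2
        exact hd2 s ⟨hs', hk⟩
      · left
        rw [Set.eq_empty_iff_forall_notMem]
        rintro s ⟨⟨_, hnk⟩, hsq⟩
        exact hnk (hs2 hsq)
      · exact absurd (no_mid q hq p hp hs2 hs) id
  have hlam' : LaminarCompletion M E f' := by
    intro p q
    rw [hCol' p, hCol' q]
    by_cases hp : (p.1, false) ∈ N1 \ N0 <;> by_cases hq : (q.1, false) ∈ N1 \ N0
    · rw [if_pos hp, if_pos hq]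
      rcases hf p q with hd | hs | hs
      · left
        rw [Set.eq_empty_iff_forall_notMem] at hd ⊢
        exact fun s hs => hd s ⟨hs.1.1, hs.2.1⟩
      · right; left; exact Set.diff_subset_diff_left hs
      · right; right; exact Set.diff_subset_diff_left hs
    · rw [if_pos hp, if_neg hq]
      exact lam_mixed p q hp hq
    · rw [if_neg hp, if_pos hq]
      exact lamsymm (lam_mixed q p hq hp)
    · rw [if_neg hp, if_neg hq]
      exact hf p q
  -- mu strictly decreases
  have hmu : mu M E f' < mu M E f := by
    apply Finset.sum_lt_sum
    · intro c _
      rw [hMi' c]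
      split
      · exact Set.ncard_le_ncard Set.diff_subset (Set.toFinite _)
      · exact le_refl _
    · refine ⟨cstar, Finset.mem_univ _, ?_⟩
      rw [hMi' cstar, if_pos hcstarD, hKdef, Set.diff_self, Set.ncard_empty]
      exact (Set.ncard_pos (Set.toFinite _)).mpr hKne
  exact absurd (hmin f' hlam') (by omega)

end Stmt2Bwd

namespace Stmt2Bwd

set_option linter.unusedSectionVars false

attribute [local instance] Classical.propDecidable

variable {S C : Type*} [Fintype S] [Fintype C]

noncomputable def encB (N : Finset (C × Bool)) : ℕ :=
  (Fintype.equivFin (Finset (C × Bool)) N).val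

noncomputable def cardB (C : Type*) [Fintype C] : ℕ := Fintype.card (Finset (C × Bool))

theorem encB_lt (N : Finset (C × Bool)) : encB N < cardB C := (Fintype.equivFin _ N).isLt

theorem encB_inj {N N' : Finset (C × Bool)} (h : encB N = encB N') : N = N' := by
  have := (Fintype.equivFin (Finset (C × Bool))).injective (Fin.ext h)
  exact this

noncomputable def key (N : Finset (C × Bool)) : ℕ := N.card * cardB C + encB N

theorem key_lt {N N' : Finset (C × Bool)} (h : N ⊂ N') : key N < key N' := by
  have hc : N.card < N'.card := Finset.card_lt_card h
  have h1 : encB N < cardB C := encB_lt N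
  have h2 : N.card * cardB C + cardB C ≤ N'.card * cardB C := by
    have : (N.card + 1) * cardB C ≤ N'.card * cardB C :=
      Nat.mul_le_mul_right _ (by omega)
    rwa [add_one_mul] at this
  unfold key
  omega

theorem key_inj {N N' : Finset (C × Bool)} (h : key N = key N') : N = N' := by
  have h1 : encB N < cardB C := encB_lt N
  have h2 : encB N' < cardB C := encB_lt N'
  have hcc : N.card = N'.card := by
    rcases lt_trichotomy N.card N'.card with hlt | heq | hgt
    · exfalso
      have : N.card * cardB C + cardB C ≤ N'.card * cardB C := by
        have : (N.card + 1) * cardB C ≤ N'.card * cardB C :=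
          Nat.mul_le_mul_right _ (by omega)
        rwa [add_one_mul] at this
      unfold key at h; omega
    · exact heq
    · exfalso
      have : N'.card * cardB C + cardB C ≤ N.card * cardB C := by
        have : (N'.card + 1) * cardB C ≤ N.card * cardB C :=
          Nat.mul_le_mul_right _ (by omega)
        rwa [add_one_mul] at this
      unfold key at h; omega
  unfold key at h
  rw [hcc] at h
  exact encB_inj (by omega)

noncomputable def Nodes (M : S → C → Bool) (E : Set (S × C)) (f : S → C → Prop) :
    Finset (Finset (C × Bool)) :=
  Finset.univ.filter (isNode M E f)

theorem mem_Nodes {M : S → C → Bool} {E : Set (S × C)} {f : S → C → Prop}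
    {N : Finset (C × Bool)} : N ∈ Nodes M E f ↔ isNode M E f N := by
  simp [Nodes]

noncomputable instance keyleDec : DecidableRel (fun A B : Finset (C × Bool) => key A ≤ key B) :=
  fun _ _ => Nat.decLe _ _

instance keyleTrans : IsTrans (Finset (C × Bool)) (fun A B => key A ≤ key B) :=
  ⟨fun _ _ _ hab hbc => le_trans hab hbc⟩

instance keyleAntisymm : IsAntisymm (Finset (C × Bool)) (fun A B => key A ≤ key B) :=
  ⟨fun _ _ hab hba => key_inj (le_antisymm hab hba)⟩

instance keyleTotal : IsTotal (Finset (C × Bool)) (fun A B => key A ≤ key B) :=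
  ⟨fun _ _ => le_total _ _⟩

noncomputable def nodeList (M : S → C → Bool) (E : Set (S × C)) (f : S → C → Prop) :
    List (Finset (C × Bool)) :=
  Finset.sort (Nodes M E f) (fun A B => key A ≤ key B)

noncomputable def nlen (M : S → C → Bool) (E : Set (S × C)) (f : S → C → Prop) : ℕ :=
  (nodeList M E f).length

noncomputable def nodeAt (M : S → C → Bool) (E : Set (S × C)) (f : S → C → Prop) (i : ℕ) :
    Finset (C × Bool) :=
  (nodeList M E f).getD i ∅

noncomputable def idx (M : S → C → Bool) (E : Set (S × C)) (f : S → C → Prop)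
    (N : Finset (C × Bool)) : ℕ :=
  (nodeList M E f).idxOf N

variable {M : S → C → Bool} {E : Set (S × C)} {f : S → C → Prop}

theorem idx_lt {N : Finset (C × Bool)} (h : isNode M E f N) : idx M E f N < nlen M E f :=
  List.idxOf_lt_length_iff.mpr ((Finset.mem_sort _).mpr (mem_Nodes.mpr h))

theorem nodeAt_idx {N : Finset (C × Bool)} (h : isNode M E f N) :
    nodeAt M E f (idx M E f N) = N := by
  have hlt := idx_lt h
  rw [nodeAt, List.getD_eq_getElem _ _ hlt]
  exact List.idxOf_get hlt

theorem idx_nodeAt {i : ℕ} (h : i < nlen M E f) : idx M E f (nodeAt M E f i) = i := by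
  rw [nodeAt, List.getD_eq_getElem _ _ h]
  exact List.get_idxOf (Finset.sort_nodup _ _) ⟨i, h⟩

theorem nodeAt_isNode {i : ℕ} (h : i < nlen M E f) : isNode M E f (nodeAt M E f i) := by
  rw [nodeAt, List.getD_eq_getElem _ _ h]
  have hmem : (nodeList M E f).get ⟨i, h⟩ ∈ nodeList M E f := List.get_mem _ _
  unfold nodeList at hmem
  exact mem_Nodes.mp ((Finset.mem_sort _).mp hmem)

theorem nodeAt_inj {i j : ℕ} (hi : i < nlen M E f) (hj : j < nlen M E f)
    (h : nodeAt M E f i = nodeAt M E f j) : i = j := by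
  have := idx_nodeAt (M := M) (E := E) (f := f) hi
  rw [h, idx_nodeAt hj] at this
  omega

theorem key_nodeAt_mono {i j : ℕ} (hij : i ≤ j) (hj : j < nlen M E f) :
    key (nodeAt M E f i) ≤ key (nodeAt M E f j) := by
  rcases eq_or_lt_of_le hij with rfl | hlt
  · exact le_refl _
  · have hi : i < nlen M E f := lt_trans hlt hj
    rw [nodeAt, nodeAt, List.getD_eq_getElem _ _ hi, List.getD_eq_getElem _ _ hj]
    have hs : List.Pairwise (fun A B : Finset (C × Bool) => key A ≤ key B) (nodeList M E f) := by
      rw [nodeList]; exact Finset.pairwise_sort _ _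
    exact hs.rel_get_of_lt (Fin.mk_lt_mk.mpr hlt)

theorem idx_lt_idx {A B : Finset (C × Bool)} (hA : isNode M E f A) (hB : isNode M E f B)
    (h : A ⊂ B) : idx M E f A < idx M E f B := by
  by_contra hc
  push_neg at hc
  have h1 := key_nodeAt_mono hc (idx_lt hA)
  rw [nodeAt_idx hA, nodeAt_idx hB] at h1
  have := key_lt h
  omega

theorem nlen_pos : 0 < nlen M E f := idx_lt (isNode_empty M E f) |>.trans_le (le_refl _) |> (fun h => lt_of_le_of_lt (Nat.zero_le _) h)

theorem nodeAt_zero : nodeAt M E f 0 = (∅ : Finset (C × Bool)) := by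
  have h0 : (0 : ℕ) < nlen M E f := nlen_pos
  have hkey : key (nodeAt M E f 0) ≤ key (∅ : Finset (C × Bool)) := by
    have := key_nodeAt_mono (Nat.zero_le (idx M E f ∅)) (idx_lt (isNode_empty M E f))
    rwa [nodeAt_idx (isNode_empty M E f)] at this
  have hcard : (nodeAt M E f 0).card = 0 := by
    by_contra hc
    have h1 : 1 ≤ (nodeAt M E f 0).card := by omega
    have h2 : cardB C ≤ (nodeAt M E f 0).card * cardB C := by
      calc cardB C = 1 * cardB C := (one_mul _).symm
      _ ≤ _ := Nat.mul_le_mul_right _ h1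
    have h3 : encB (∅ : Finset (C × Bool)) < cardB C := encB_lt _
    unfold key at hkey
    simp only [Finset.card_empty, Nat.zero_mul, Nat.zero_add] at hkey
    omega
  exact Finset.card_eq_zero.mp hcard

theorem nodeAt_ne_empty {i : ℕ} (h0 : 0 < i) (h : i < nlen M E f) :
    nodeAt M E f i ≠ ∅ := by
  intro hc
  have := nodeAt_inj h nlen_pos (by rw [hc, nodeAt_zero])
  omega

/-- the immediate predecessor (parent set) of a node -/
noncomputable def predSet (M : S → C → Bool) (E : Set (S × C)) (f : S → C → Prop)
    (N : Finset (C × Bool)) : Finset (C × Bool) :=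
  if h : ∃ A, isNode M E f A ∧ A ⊂ N ∧ ∀ B, isNode M E f B → B ⊂ N → B ⊆ A then
    h.choose
  else ∅

theorem predSet_spec (hf : LaminarCompletion M E f) {N : Finset (C × Bool)}
    (hN : isNode M E f N) (hne : N ≠ ∅) :
    isNode M E f (predSet M E f N) ∧ predSet M E f N ⊂ N ∧
      ∀ B, isNode M E f B → B ⊂ N → B ⊆ predSet M E f N := by
  have hex : ∃ A, isNode M E f A ∧ A ⊂ N ∧ ∀ B, isNode M E f B → B ⊂ N → B ⊆ A := by
    -- candidates
    set P : Finset (Finset (C × Bool)) :=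
      (Nodes M E f).filter (fun A => A ⊂ N) with hPdef
    have hPne : P.Nonempty := by
      refine ⟨∅, ?_⟩
      rw [hPdef, Finset.mem_filter]
      exact ⟨mem_Nodes.mpr (isNode_empty M E f),
        Finset.ssubset_iff_subset_ne.mpr ⟨Finset.empty_subset N, Ne.symm hne⟩⟩
    obtain ⟨A, hA, hAmax⟩ := P.exists_max_image Finset.card hPne
    rw [hPdef, Finset.mem_filter] at hA
    have hAnode := mem_Nodes.mp hA.1
    refine ⟨A, hAnode, hA.2, fun B hB hBN => ?_⟩
    have hBP : B ∈ P := by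
      rw [hPdef, Finset.mem_filter]
      exact ⟨mem_Nodes.mpr hB, hBN⟩
    have hcard := hAmax B hBP
    rcases nodes_comparable hf hN hB hAnode hBN.subset hA.2.subset with hs | hs
    · exact hs
    · have heq := Finset.eq_of_subset_of_card_le hs hcard
      rw [heq]
  rw [predSet, dif_pos hex]
  exact hex.choose_spec

/-- the parent function of the tree -/
noncomputable def par (M : S → C → Bool) (E : Set (S × C)) (f : S → C → Prop) (i : ℕ) : ℕ :=
  if nodeAt M E f i = ∅ then 0 else idx M E f (predSet M E f (nodeAt M E f i))

theorem par_zero : par M E f 0 = 0 := by rw [par, if_pos nodeAt_zero]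

theorem par_out {i : ℕ} (h : nlen M E f ≤ i) : par M E f i = 0 := by
  rw [par, if_pos]
  rw [nodeAt, List.getD_eq_default _ _ h]

theorem nodeAt_par (hf : LaminarCompletion M E f) {i : ℕ} (h0 : 0 < i) (h : i < nlen M E f) :
    nodeAt M E f (par M E f i) = predSet M E f (nodeAt M E f i) := by
  have hne := nodeAt_ne_empty h0 h
  rw [par, if_neg hne]
  exact nodeAt_idx (predSet_spec hf (nodeAt_isNode h) hne).1

theorem par_lt (hf : LaminarCompletion M E f) {i : ℕ} (h0 : 0 < i) (h : i < nlen M E f) :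
    par M E f i < i := by
  have hne := nodeAt_ne_empty h0 h
  obtain ⟨hnode, hss, _⟩ := predSet_spec hf (nodeAt_isNode h) hne
  rw [par, if_neg hne]
  have := idx_lt_idx hnode (nodeAt_isNode h) hss
  rwa [idx_nodeAt h] at this

theorem anc_of_sub (hf : LaminarCompletion M E f) :
    ∀ j, j < nlen M E f → ∀ i, i < nlen M E f →
      nodeAt M E f i ⊆ nodeAt M E f j → AncRel (par M E f) i j := by
  intro j
  induction j using Nat.strong_induction_on with
  | _ j ih =>
    intro hj i hi hsub
    by_cases heq : nodeAt M E f i = nodeAt M E f j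
    · exact ⟨0, (nodeAt_inj hi hj heq).symm ▸ rfl⟩
    · have hss : nodeAt M E f i ⊂ nodeAt M E f j := ⟨hsub, fun h => heq (Finset.Subset.antisymm hsub h)⟩
      have hjne : nodeAt M E f j ≠ ∅ := by
        intro hc
        rw [hc] at hss
        exact absurd hss.subset (by simpa using hss.2 ∘ (fun h => h))
      have hj0 : 0 < j := by
        rcases Nat.eq_zero_or_pos j with rfl | h
        · exact absurd nodeAt_zero hjne
        · exact h
      obtain ⟨_, hpss, hpmax⟩ := predSet_spec hf (nodeAt_isNode hj) hjne
      have hsubp : nodeAt M E f i ⊆ predSet M E f (nodeAt M E f j) :=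
        hpmax _ (nodeAt_isNode hi) hss
      rw [← nodeAt_par hf hj0 hj] at hsubp
      have hplt := par_lt hf hj0 hj
      obtain ⟨k, hk⟩ := ih (par M E f j) hplt (hplt.trans hj) i hi hsubp
      exact ⟨k + 1, by rwa [Function.iterate_succ_apply]⟩

theorem sub_of_anc (hf : LaminarCompletion M E f) {j : ℕ} (hj : j < nlen M E f) :
    ∀ k, (par M E f)^[k] j < nlen M E f ∧
      nodeAt M E f ((par M E f)^[k] j) ⊆ nodeAt M E f j := by
  intro k
  induction k with
  | zero => exact ⟨hj, Finset.Subset.refl _⟩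
  | succ k ihk =>
    obtain ⟨hlt, hsub⟩ := ihk
    rw [Function.iterate_succ_apply']
    set y := (par M E f)^[k] j with hy
    rcases Nat.eq_zero_or_pos y with h0 | h0
    · rw [h0, par_zero]
      rw [h0] at hsub
      exact ⟨hlt.trans_le' (by omega), hsub⟩
    · have hple := par_lt hf h0 hlt
      refine ⟨hple.trans hlt, ?_⟩
      rw [nodeAt_par hf h0 hlt]
      exact (predSet_spec hf (nodeAt_isNode hlt) (nodeAt_ne_empty h0 hlt)).2.1.subset.trans hsub

theorem sub_of_ancRel (hf : LaminarCompletion M E f) {i j : ℕ} (hj : j < nlen M E f)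
    (h : AncRel (par M E f) i j) : i < nlen M E f ∧ nodeAt M E f i ⊆ nodeAt M E f j := by
  obtain ⟨k, hk⟩ := h
  have := sub_of_anc hf hj k
  rwa [hk] at this

end Stmt2Bwd

namespace Stmt2Bwd

set_option linter.unusedSectionVars false

attribute [local instance] Classical.propDecidable

variable {S C : Type*} [Fintype S] [Fintype C]

noncomputable def labelAt (M : S → C → Bool) (E : Set (S × C)) (f : S → C → Prop)
    (i : ℕ) (c : C) : Bool :=
  projB (nodeAt M E f i) c

def gainF (M : S → C → Bool) (E : Set (S × C)) (f : S → C → Prop) (c : C) (i : ℕ) : Prop :=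
  (c, true) ∈ nodeAt M E f i ∧ (c, true) ∉ nodeAt M E f (par M E f i) ∧
    (c, false) ∉ nodeAt M E f i

def lossF (M : S → C → Bool) (E : Set (S × C)) (f : S → C → Prop) (c : C) (i : ℕ) : Prop :=
  (c, false) ∈ nodeAt M E f i ∧ (c, false) ∉ nodeAt M E f (par M E f i) ∧
    (c, true) ∈ nodeAt M E f (par M E f i)

variable {M : S → C → Bool} {E : Set (S × C)} {f : S → C → Prop}

theorem par_sub (hf : LaminarCompletion M E f) {i : ℕ} (h0 : 0 < i) (h : i < nlen M E f) :
    nodeAt M E f (par M E f i) ⊆ nodeAt M E f i := by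
  rw [nodeAt_par hf h0 h]
  exact (predSet_spec hf (nodeAt_isNode h) (nodeAt_ne_empty h0 h)).2.1.subset

theorem flip_iff (hf : LaminarCompletion M E f) {i : ℕ} (h0 : 0 < i) (h : i < nlen M E f)
    (c : C) :
    labelAt M E f (par M E f i) c ≠ labelAt M E f i c ↔
      (gainF M E f c i ∨ lossF M E f c i) := by
  have hsub := par_sub hf h0 h
  have hclN : (c, false) ∈ nodeAt M E f i → (c, true) ∈ nodeAt M E f i :=
    node_closure (nodeAt_isNode h)
  constructor
  · intro hne
    cases hN : labelAt M E f i c with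
    | true =>
      obtain ⟨h1, h2⟩ := projB_true_iff.mp hN
      have hPfalse : labelAt M E f (par M E f i) c = false := by
        cases hP : labelAt M E f (par M E f i) c
        · rfl
        · rw [hN, hP] at hne; exact absurd rfl hne
      rcases projB_false_iff.mp hPfalse with h3 | h3
      · exact Or.inl ⟨h1, h3, h2⟩
      · exact absurd (hsub h3) h2
    | false =>
      have hPtrue : labelAt M E f (par M E f i) c = true := by
        cases hP : labelAt M E f (par M E f i) c
        · rw [hN, hP] at hne; exact absurd rfl hne
        · rfl
      obtain ⟨h3, h4⟩ := projB_true_iff.mp hPtrue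
      rcases projB_false_iff.mp hN with h1 | h1
      · exact absurd (hsub h3) h1
      · exact Or.inr ⟨h1, h4, h3⟩
  · rintro (⟨hg1, hg2, hg3⟩ | ⟨hl1, hl2, hl3⟩)
    · have hN : labelAt M E f i c = true := projB_true_iff.mpr ⟨hg1, hg3⟩
      have hP : labelAt M E f (par M E f i) c = false := projB_false_iff.mpr (Or.inl hg2)
      rw [hN, hP]; simp
    · have hN : labelAt M E f i c = false := projB_false_iff.mpr (Or.inr hl1)
      have hP : labelAt M E f (par M E f i) c = true := projB_true_iff.mpr ⟨hl3, hl2⟩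
      rw [hN, hP]; simp

theorem gain_sub (hf : LaminarCompletion M E f) {i : ℕ} {c : C} (h0 : 0 < i)
    (h : i < nlen M E f) (hg : gainF M E f c i) {N' : Finset (C × Bool)}
    (hN' : isNode M E f N') (hc : (c, true) ∈ N') : nodeAt M E f i ⊆ N' := by
  set Q := nodeAt M E f i ∩ N' with hQdef
  have hQ : isNode M E f Q := isNode_inter (nodeAt_isNode h) hN'
  have hQc : (c, true) ∈ Q := Finset.mem_inter.mpr ⟨hg.1, hc⟩
  by_cases heq : Q = nodeAt M E f i
  · exact Finset.inter_eq_left.mp heq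
  · exfalso
    have hss : Q ⊂ nodeAt M E f i := ⟨Finset.inter_subset_left, fun hs => heq
      (Finset.Subset.antisymm Finset.inter_subset_left hs)⟩
    have := (predSet_spec hf (nodeAt_isNode h) (nodeAt_ne_empty h0 h)).2.2 Q hQ hss
    rw [← nodeAt_par hf h0 h] at this
    exact hg.2.1 (this hQc)

theorem loss_sub (hf : LaminarCompletion M E f) {i : ℕ} {c : C} (h0 : 0 < i)
    (h : i < nlen M E f) (hg : lossF M E f c i) {N' : Finset (C × Bool)}
    (hN' : isNode M E f N') (hc : (c, false) ∈ N') : nodeAt M E f i ⊆ N' := by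
  set Q := nodeAt M E f i ∩ N' with hQdef
  have hQ : isNode M E f Q := isNode_inter (nodeAt_isNode h) hN'
  have hQc : (c, false) ∈ Q := Finset.mem_inter.mpr ⟨hg.1, hc⟩
  by_cases heq : Q = nodeAt M E f i
  · exact Finset.inter_eq_left.mp heq
  · exfalso
    have hss : Q ⊂ nodeAt M E f i := ⟨Finset.inter_subset_left, fun hs => heq
      (Finset.Subset.antisymm Finset.inter_subset_left hs)⟩
    have := (predSet_spec hf (nodeAt_isNode h) (nodeAt_ne_empty h0 h)).2.2 Q hQ hss
    rw [← nodeAt_par hf h0 h] at this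
    exact hg.2.1 (this hQc)

theorem gainF_unique (hf : LaminarCompletion M E f) {i j : ℕ} {c : C}
    (hi0 : 0 < i) (hi : i < nlen M E f) (hj0 : 0 < j) (hj : j < nlen M E f)
    (hgi : gainF M E f c i) (hgj : gainF M E f c j) : i = j := by
  have h1 : nodeAt M E f i ⊆ nodeAt M E f j := gain_sub hf hi0 hi hgi (nodeAt_isNode hj) hgj.1
  have h2 : nodeAt M E f j ⊆ nodeAt M E f i := gain_sub hf hj0 hj hgj (nodeAt_isNode hi) hgi.1
  exact nodeAt_inj hi hj (Finset.Subset.antisymm h1 h2)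

theorem lossF_unique (hf : LaminarCompletion M E f) {i j : ℕ} {c : C}
    (hi0 : 0 < i) (hi : i < nlen M E f) (hj0 : 0 < j) (hj : j < nlen M E f)
    (hgi : lossF M E f c i) (hgj : lossF M E f c j) : i = j := by
  have h1 : nodeAt M E f i ⊆ nodeAt M E f j := loss_sub hf hi0 hi hgi (nodeAt_isNode hj) hgj.1
  have h2 : nodeAt M E f j ⊆ nodeAt M E f i := loss_sub hf hj0 hj hgj (nodeAt_isNode hi) hgi.1
  exact nodeAt_inj hi hj (Finset.Subset.antisymm h1 h2)

theorem not_gain_loss {i : ℕ} {c : C} (hg : gainF M E f c i) (hl : lossF M E f c i) : False :=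
  hg.2.2 hl.1

/-- the minimal node containing `c⁺` -/
theorem exists_gain_node {c : C} {N0 : Finset (C × Bool)}
    (hN0 : isNode M E f N0) (hc : (c, true) ∈ N0) :
    ∃ G, isNode M E f G ∧ (c, true) ∈ G ∧
      ∀ N', isNode M E f N' → (c, true) ∈ N' → G ⊆ N' := by
  set Zs : Finset S := Finset.univ.filter (fun v => v ∈ ColPlus M E f c) with hZs
  have hZmem : ∀ v : S, v ∈ Zs ↔ v ∈ ColPlus M E f c := by intro v; simp [hZs]
  have hZne : Zs.Nonempty := by
    rcases hN0 with rfl | ⟨Z0, hZ0ne, rfl⟩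
    · simp at hc
    · obtain ⟨v, hv⟩ := hZ0ne
      have := (mem_infSig.mp hc) v hv
      rw [colOf_true] at this
      exact ⟨v, (hZmem v).mpr this⟩
  refine ⟨infSig M E f Zs, Or.inr ⟨Zs, hZne, rfl⟩, ?_, ?_⟩
  · rw [mem_infSig]
    intro v hv
    rw [colOf_true]
    exact (hZmem v).mp hv
  · intro N' hN' hc'
    rcases hN' with rfl | ⟨Z', hZ'ne, rfl⟩
    · simp at hc'
    · intro p hp
      rw [mem_infSig] at hp ⊢
      intro v hv
      have hvPlus : v ∈ ColPlus M E f c := by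
        have := (mem_infSig.mp hc') v hv
        rwa [colOf_true] at this
      exact hp v ((hZmem v).mpr hvPlus)

theorem projB_sig (M : S → C → Bool) (E : Set (S × C)) (f : S → C → Prop) (s : S) (c : C) :
    projB (sig M E f s) c = M s c := by
  have hplus : (c, true) ∈ sig M E f s ↔ s ∈ ColPlus M E f c := by
    rw [mem_sig, colOf_true]
  have hminus : (c, false) ∈ sig M E f s ↔ s ∈ ColMinus M E f c := by
    rw [mem_sig, colOf_false]
  cases hM : M s c
  · rw [projB_false_iff]
    by_cases hmem : s ∈ ColMinus M E f c
    · exact Or.inr (hminus.mpr hmem)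
    · refine Or.inl (fun hmem' => ?_)
      rcases hplus.mp hmem' with h | h
      · rw [hM] at h; exact Bool.false_ne_true h
      · exact hmem h
  · rw [projB_true_iff]
    refine ⟨hplus.mpr (Or.inl hM), fun hmem => ?_⟩
    have := (hminus.mp hmem).2.1
    rw [hM] at this
    exact absurd this (by simp)

theorem label_inj_full (hf : LaminarCompletion M E f)
    (hmin : ∀ g : S → C → Prop, LaminarCompletion M E g → mu M E f ≤ mu M E g)
    {A B : Finset (C × Bool)} (hA : isNode M E f A) (hB : isNode M E f B)
    (hproj : projB A = projB B) : A = B := by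
  have h1 : A ∩ B = A :=
    label_inj hf hmin (isNode_inter hA hB) hA Finset.inter_subset_left (projB_inter hproj)
  have h2 : B ∩ A = B :=
    label_inj hf hmin (isNode_inter hB hA) hB Finset.inter_subset_left (projB_inter hproj.symm)
  rw [Finset.inter_comm] at h2
  exact h1.symm.trans h2

end Stmt2Bwd

namespace Stmt2Bwd

set_option linter.unusedSectionVars false

attribute [local instance] Classical.propDecidable

variable {S C : Type*} [Fintype S] [Fintype C]

variable {M : S → C → Bool} {E : Set (S × C)} {f : S → C → Prop}

theorem gainF_par_label {c : C} {i : ℕ} (hg : gainF M E f c i) :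
    labelAt M E f (par M E f i) c = false := projB_false_iff.mpr (Or.inl hg.2.1)

theorem gainF_label {c : C} {i : ℕ} (hg : gainF M E f c i) :
    labelAt M E f i c = true := projB_true_iff.mpr ⟨hg.1, hg.2.2⟩

theorem lossF_par_label {c : C} {i : ℕ} (hl : lossF M E f c i) :
    labelAt M E f (par M E f i) c = true := projB_true_iff.mpr ⟨hl.2.2, hl.2.1⟩

theorem lossF_label {c : C} {i : ℕ} (hl : lossF M E f c i) :
    labelAt M E f i c = false := projB_false_iff.mpr (Or.inr hl.1)

noncomputable def buildTree (M : S → C → Bool) (E : Set (S × C)) (f : S → C → Prop)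
    (hf : LaminarCompletion M E f)
    (hmin : ∀ g : S → C → Prop, LaminarCompletion M E g → mu M E f ≤ mu M E g) :
    PPTree S C M where
  n := nlen M E f
  n_pos := nlen_pos
  parent := par M E f
  parent_lt := fun _ h0 h => par_lt hf h0 h
  label := labelAt M E f
  root_label := fun c => by rw [labelAt, nodeAt_zero]; exact projB_empty c
  changes_le_two := by
    intro c i j k hi hj hk
    rcases (flip_iff hf hi.1 hi.2.1 c).mp hi.2.2 with g1 | l1 <;>
      rcases (flip_iff hf hj.1 hj.2.1 c).mp hj.2.2 with g2 | l2 <;>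
      rcases (flip_iff hf hk.1 hk.2.1 c).mp hk.2.2 with g3 | l3
    · exact Or.inl (gainF_unique hf hi.1 hi.2.1 hj.1 hj.2.1 g1 g2)
    · exact Or.inl (gainF_unique hf hi.1 hi.2.1 hj.1 hj.2.1 g1 g2)
    · exact Or.inr (Or.inl (gainF_unique hf hi.1 hi.2.1 hk.1 hk.2.1 g1 g3))
    · exact Or.inr (Or.inr (lossF_unique hf hj.1 hj.2.1 hk.1 hk.2.1 l2 l3))
    · exact Or.inr (Or.inr (gainF_unique hf hj.1 hj.2.1 hk.1 hk.2.1 g2 g3))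
    · exact Or.inr (Or.inl (lossF_unique hf hi.1 hi.2.1 hk.1 hk.2.1 l1 l3))
    · exact Or.inl (lossF_unique hf hi.1 hi.2.1 hj.1 hj.2.1 l1 l2)
    · exact Or.inl (lossF_unique hf hi.1 hi.2.1 hj.1 hj.2.1 l1 l2)
  changes_on_path := by
    intro c i j hi hj hne
    rcases (flip_iff hf hi.1 hi.2.1 c).mp hi.2.2 with g1 | l1 <;>
      rcases (flip_iff hf hj.1 hj.2.1 c).mp hj.2.2 with g2 | l2
    · exact absurd (gainF_unique hf hi.1 hi.2.1 hj.1 hj.2.1 g1 g2) hne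
    · left
      have hcj : (c, true) ∈ nodeAt M E f j := node_closure (nodeAt_isNode hj.2.1) l2.1
      have hsub : nodeAt M E f i ⊆ nodeAt M E f j :=
        gain_sub hf hi.1 hi.2.1 g1 (nodeAt_isNode hj.2.1) hcj
      exact ⟨anc_of_sub hf j hj.2.1 i hi.2.1 hsub, gainF_par_label g1, gainF_label g1,
        lossF_par_label l2, lossF_label l2⟩
    · right
      have hci : (c, true) ∈ nodeAt M E f i := node_closure (nodeAt_isNode hi.2.1) l1.1
      have hsub : nodeAt M E f j ⊆ nodeAt M E f i :=
        gain_sub hf hj.1 hj.2.1 g2 (nodeAt_isNode hi.2.1) hci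
      exact ⟨anc_of_sub hf i hi.2.1 j hj.2.1 hsub, gainF_par_label g2, gainF_label g2,
        lossF_par_label l1, lossF_label l1⟩
    · exact absurd (lossF_unique hf hi.1 hi.2.1 hj.1 hj.2.1 l1 l2) hne
  single_change_gain := by
    intro c i hi huniq
    rcases (flip_iff hf hi.1 hi.2.1 c).mp hi.2.2 with g1 | l1
    · exact ⟨gainF_par_label g1, gainF_label g1⟩
    · exfalso
      have hparn : par M E f i < nlen M E f := (par_lt hf hi.1 hi.2.1).trans hi.2.1
      obtain ⟨G, hGnode, hGc, hGmin⟩ :=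
        exists_gain_node (nodeAt_isNode hparn) l1.2.2
      have hGne : G ≠ ∅ := fun h => by rw [h] at hGc; simp at hGc
      set g := idx M E f G with hgdef
      have hgn : g < nlen M E f := idx_lt hGnode
      have hnodeg : nodeAt M E f g = G := nodeAt_idx hGnode
      have hg0 : 0 < g := by
        rcases Nat.eq_zero_or_pos g with h0 | h0
        · exfalso
          rw [h0] at hnodeg
          rw [nodeAt_zero] at hnodeg
          exact hGne hnodeg.symm
        · exact h0
      have hgain : gainF M E f c g := by
        refine ⟨by rw [hnodeg]; exact hGc, ?_, ?_⟩
        · intro hmem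
          have hsubp : nodeAt M E f (par M E f g) ⊂ nodeAt M E f g := by
            rw [nodeAt_par hf hg0 hgn]
            exact (predSet_spec hf (nodeAt_isNode hgn) (by rwa [hnodeg])).2.1
          have := hGmin _ (nodeAt_isNode (lt_trans (par_lt hf hg0 hgn) hgn)) hmem
          rw [hnodeg] at hsubp
          exact hsubp.2 this
        · intro hmem
          rw [hnodeg] at hmem
          have hsub : G ⊆ nodeAt M E f (par M E f i) :=
            hGmin _ (nodeAt_isNode hparn) l1.2.2
          exact l1.2.1 (hsub hmem)
      have hflip : labelAt M E f (par M E f g) c ≠ labelAt M E f g c :=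
        (flip_iff hf hg0 hgn c).mpr (Or.inl hgain)
      have := huniq g ⟨hg0, hgn, hflip⟩
      rw [this] at hgain
      exact not_gain_loss hgain l1
  rows_label := by
    intro s
    have hsig := isNode_sig M E f s
    refine ⟨idx M E f (sig M E f s), ⟨idx_lt hsig, fun c => ?_⟩, ?_⟩
    · rw [labelAt, nodeAt_idx hsig]
      exact projB_sig M E f s c
    · rintro y ⟨hy, hylab⟩
      have hproj : projB (nodeAt M E f y) = projB (sig M E f s) := by
        funext c
        rw [projB_sig M E f s c]
        exact hylab c
      have := label_inj_full hf hmin (nodeAt_isNode hy) hsig hproj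
      rw [← idx_nodeAt hy, this]

theorem buildTree_consistent (hf : LaminarCompletion M E f)
    (hmin : ∀ g : S → C → Prop, LaminarCompletion M E g → mu M E f ≤ mu M E g) :
    (buildTree M E f hf hmin).consistent E := by
  rintro ⟨s, c⟩ hp x hx hlab hpers
  obtain ⟨_, ⟨j, hj0, hjn, hanc, hjlab1, hjlab2⟩⟩ := hpers
  have hjn' : j < nlen M E f := hjn
  have hflip : labelAt M E f (par M E f j) c ≠ labelAt M E f j c := by
    intro h
    rw [show (buildTree M E f hf hmin).label = labelAt M E f from rfl] at hjlab1 hjlab2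
    rw [show (buildTree M E f hf hmin).parent = par M E f from rfl] at hjlab1
    rw [hjlab1, hjlab2] at h
    simp at h
  have hloss : lossF M E f c j := by
    rcases (flip_iff hf hj0 hjn' c).mp hflip with hg | hl
    · exfalso
      have := gainF_par_label hg
      rw [show (buildTree M E f hf hmin).label = labelAt M E f from rfl] at hjlab1
      rw [show (buildTree M E f hf hmin).parent = par M E f from rfl] at hjlab1
      rw [hjlab1] at this
      simp at this
    · exact hl
  -- the node of x is the signature of s
  have hsig := isNode_sig M E f s
  have hproj : projB (nodeAt M E f x) = projB (sig M E f s) := by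
    funext c'
    rw [projB_sig M E f s c']
    exact hlab c'
  have hxsig : nodeAt M E f x = sig M E f s :=
    label_inj_full hf hmin (nodeAt_isNode hx) hsig hproj
  -- c⁻ belongs to the signature of s
  have hsub := (sub_of_ancRel hf (show x < nlen M E f from hx) hanc).2
  have hmem : (c, false) ∈ sig M E f s := by
    rw [← hxsig]
    exact hsub hloss.1
  have : s ∈ ColMinus M E f c := by
    have := mem_sig.mp hmem
    rwa [colOf_false] at this
  exact this.1 hp

end Stmt2Bwd




/-- `(M, E)` admits a persistent perfect phylogeny consistent with
`E` iff the extended matrix of `(M, E)` admits a completion with pairwise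
laminar columns. -/
theorem stmt2 {S C : Type*} [Fintype S] [Fintype C] (M : S → C → Bool)
    (E : Set (S × C)) (hE : ∀ p ∈ E, M p.1 p.2 = false) :
    (∃ T : PPTree S C M, T.consistent E) ↔
      ∃ f : S → C → Prop, LaminarCompletion M E f := by
  constructor
  · rintro ⟨T, hcons⟩
    exact ⟨Stmt2Fwd.fCan T, Stmt2Fwd.forward T hcons⟩
  · rintro ⟨f, hf⟩
    have hΩ : {m : ℕ | ∃ g : S → C → Prop, LaminarCompletion M E g ∧ Stmt2Bwd.mu M E g = m}.Nonempty :=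
      ⟨Stmt2Bwd.mu M E f, f, hf, rfl⟩
    obtain ⟨g, hg, hgmu⟩ := Nat.sInf_mem hΩ
    have hmin : ∀ g' : S → C → Prop, LaminarCompletion M E g' →
        Stmt2Bwd.mu M E g ≤ Stmt2Bwd.mu M E g' := by
      intro g' hg'
      rw [hgmu]
      exact Nat.sInf_le ⟨g', hg', rfl⟩
    exact ⟨Stmt2Bwd.buildTree M E g hg hmin, Stmt2Bwd.buildTree_consistent hg hmin⟩
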